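/- arXiv:2306.02338 — 6 statements merged into one kernel-verified Lean document; each statement's English description precedes it below -/
import Mathlib

section
/- Let G = (V, E) be a finite simple undirected graph with V nonempty and let k ≥ 1 be an integer. Form the graph G' = (V ∪ D, E) by adding a set D of k new isolated vertices (disjoint from V); color every vertex of V with one color and every vertex of D with a second color, and set α = 1/2. Then max{ d_{G'}(S) : ∅ ≠ S ⊆ V ∪ D, α(S) ≤ 1/2 } = (1/2) · max{ d_G(T) : ∅ ≠ T ⊆ V, |T| ≤ k } (so this DDSP instance exactly encodes the densest at-most-k-subgraph problem on G, with optimal value halved). -/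
open Finset Pointwise

/-- The set of edges of `G` with both endpoints in `S`. -/
def edgesIn {V : Type*} [Fintype V] [DecidableEq V] (G : SimpleGraph V) [DecidableRel G.Adj]
    (S : Finset V) : Finset (Sym2 V) :=
  G.edgeFinset.filter (fun e => ∀ v ∈ e, v ∈ S)

/-- The (degree) density `d(S) = |E(S)|/|S|`. -/
noncomputable def density {V : Type*} [Fintype V] [DecidableEq V] (G : SimpleGraph V)
    [DecidableRel G.Adj] (S : Finset V) : ℝ :=
  ((edgesIn G S).card : ℝ) / S.card

/-- `S_c`, the set of nodes of `S` with color `c`. -/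
def colorClass {V C : Type*} [DecidableEq V] [DecidableEq C] (ℓ : V → C) (S : Finset V) (c : C) :
    Finset V := S.filter (fun v => ℓ v = c)

/-- `c_max(S)`, the maximum number of nodes of `S` sharing a single color. -/
def cmax {V C : Type*} [DecidableEq V] [Fintype C] [DecidableEq C] (ℓ : V → C) (S : Finset V) : ℕ :=
  Finset.univ.sup (fun c => (colorClass ℓ S c).card)

/-- `α(S) = c_max(S)/|S|`, the maximum fraction of monochromatic nodes in `S`. -/
noncomputable def alphaOf {V C : Type*} [DecidableEq V] [Fintype C] [DecidableEq C]
    (ℓ : V → C) (S : Finset V) : ℝ := (cmax ℓ S : ℝ) / S.card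

/-- The graph `G' = (V ∪ D, E)` obtained from `G` by adding `k` new isolated vertices:
the vertex set is `V ⊕ Fin k` and the edge set is unchanged. -/
def extendGraph {V : Type*} (G : SimpleGraph V) (k : ℕ) : SimpleGraph (V ⊕ Fin k) where
  Adj a b := ∃ u v, a = Sum.inl u ∧ b = Sum.inl v ∧ G.Adj u v
  symm := by constructor; rintro a b ⟨u, v, rfl, rfl, h⟩; exact ⟨v, u, rfl, rfl, h.symm⟩
  loopless := by
    constructor
    rintro a ⟨u, v, rfl, h, hadj⟩
    rw [Sum.inl.injEq] at h
    subst h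
    exact G.loopless.irrefl u hadj

noncomputable instance {V : Type*} (G : SimpleGraph V) (k : ℕ) :
    DecidableRel (extendGraph G k).Adj := Classical.decRel _

section AuxLemmas

variable {V : Type*} [Fintype V] [DecidableEq V] (G : SimpleGraph V) [DecidableRel G.Adj] (k : ℕ)

lemma edgesIn_extend (S : Finset (V ⊕ Fin k)) :
    edgesIn (extendGraph G k) S =
      (edgesIn G S.toLeft).map ⟨Sym2.map Sum.inl, Sym2.map.injective Sum.inl_injective⟩ := by
  ext e
  induction e using Sym2.ind with
  | _ a b =>
    simp only [edgesIn, mem_filter, Finset.mem_map, SimpleGraph.mem_edgeFinset,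
      SimpleGraph.mem_edgeSet, Function.Embedding.coeFn_mk, Sym2.mem_iff]
    constructor
    · rintro ⟨⟨u, v, rfl, rfl, huv⟩, hmem⟩
      refine ⟨s(u, v), ⟨⟨huv, ?_⟩, Sym2.map_pair_eq _ _ _⟩⟩
      intro x hx
      rw [Sym2.mem_iff] at hx
      rcases hx with rfl | rfl
      · exact Finset.mem_toLeft.2 (hmem _ (Or.inl rfl))
      · exact Finset.mem_toLeft.2 (hmem _ (Or.inr rfl))
    · rintro ⟨e', ⟨he', hmem⟩, heq⟩
      induction e' using Sym2.ind with
      | _ u v =>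
        rw [SimpleGraph.mem_edgeSet] at he'
        rw [Sym2.map_pair_eq, Sym2.eq_iff] at heq
        have hu : Sum.inl u ∈ S := Finset.mem_toLeft.1 (hmem u (by simp))
        have hv : Sum.inl v ∈ S := Finset.mem_toLeft.1 (hmem v (by simp))
        rcases heq with ⟨rfl, rfl⟩ | ⟨rfl, rfl⟩
        · exact ⟨⟨u, v, rfl, rfl, he'⟩, fun x hx => by rcases hx with rfl | rfl <;> assumption⟩
        · exact ⟨⟨v, u, rfl, rfl, he'.symm⟩,
            fun x hx => by rcases hx with rfl | rfl <;> assumption⟩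

lemma card_edgesIn_extend (S : Finset (V ⊕ Fin k)) :
    (edgesIn (extendGraph G k) S).card = (edgesIn G S.toLeft).card := by
  rw [edgesIn_extend, Finset.card_map]

lemma cmax_extend (S : Finset (V ⊕ Fin k)) :
    cmax (Sum.elim (fun _ => (false : Bool)) (fun _ => (true : Bool))) S =
      max S.toLeft.card S.toRight.card := by
  have hfalse : colorClass (Sum.elim (fun _ => (false : Bool)) (fun _ => (true : Bool))) S false =
      S.toLeft.map ⟨Sum.inl, Sum.inl_injective⟩ := by
    ext x
    cases x <;> simp [colorClass]
  have htrue : colorClass (Sum.elim (fun _ => (false : Bool)) (fun _ => (true : Bool))) S true =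
      S.toRight.map ⟨Sum.inr, Sum.inr_injective⟩ := by
    ext x
    cases x <;> simp [colorClass]
  rw [cmax, Fintype.univ_bool, Finset.sup_insert, Finset.sup_singleton, hfalse, htrue,
    Finset.card_map, Finset.card_map]
  exact max_comm _ _

end AuxLemmas

/-- Adding `k` isolated dummy nodes of a second color and setting `α = 1/2` encodes the densest
at-most-`k`-subgraph problem: the optimal DDSP value on `G'` is half the optimal DamkS value. -/
theorem stmt1 {V : Type*} [Fintype V] [DecidableEq V] [Nonempty V]
    (G : SimpleGraph V) [DecidableRel G.Adj] (k : ℕ) (hk : 1 ≤ k) :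
    sSup {x : ℝ | ∃ S : Finset (V ⊕ Fin k), S.Nonempty ∧
        alphaOf (Sum.elim (fun _ => (false : Bool)) (fun _ => (true : Bool))) S ≤ 1 / 2 ∧
        density (extendGraph G k) S = x}
      = (1 / 2) *
        sSup {x : ℝ | ∃ T : Finset V, T.Nonempty ∧ T.card ≤ k ∧ density G T = x} := by
  have hset : {x : ℝ | ∃ S : Finset (V ⊕ Fin k), S.Nonempty ∧
        alphaOf (Sum.elim (fun _ => (false : Bool)) (fun _ => (true : Bool))) S ≤ 1 / 2 ∧
        density (extendGraph G k) S = x}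
      = (1 / 2 : ℝ) • {x : ℝ | ∃ T : Finset V, T.Nonempty ∧ T.card ≤ k ∧ density G T = x} := by
    ext x
    simp only [Set.mem_smul_set, Set.mem_setOf_eq, smul_eq_mul]
    constructor
    · rintro ⟨S, hSne, halpha, rfl⟩
      set a := S.toLeft.card with ha
      set b := S.toRight.card with hb
      have hcard : a + b = S.card := Finset.card_toLeft_add_card_toRight
      have hSpos : 0 < S.card := Finset.card_pos.2 hSne
      -- from the alpha constraint, deduce a = b
      have hab : a = b := by
        rw [alphaOf] at halpha
        have hcast : (cmax (Sum.elim (fun _ => (false : Bool)) (fun _ => (true : Bool))) S : ℝ)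
            * 2 ≤ S.card := by
          rw [div_le_div_iff₀ (by exact_mod_cast hSpos) two_pos, one_mul] at halpha
          exact halpha
        have h1 : 2 * cmax (Sum.elim (fun _ => (false : Bool)) (fun _ => (true : Bool))) S
            ≤ S.card := by rw [mul_comm] at hcast; exact_mod_cast hcast
        rw [cmax_extend] at h1
        rw [← hcard] at h1
        rcases le_total a b with h | h
        · rw [max_eq_right h] at h1; omega
        · rw [max_eq_left h] at h1; omega
      have hapos : 0 < a := by omega
      have hbk : b ≤ k := by
        have := Finset.card_le_univ S.toRight
        simpa using this
      refine ⟨density G S.toLeft, ⟨S.toLeft, Finset.card_pos.1 hapos, by omega, rfl⟩, ?_⟩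
      rw [density, density, card_edgesIn_extend]
      have : (S.card : ℝ) = 2 * a := by
        have : S.card = 2 * a := by omega
        exact_mod_cast this
      rw [this]
      push_cast
      ring
    · rintro ⟨y, ⟨T, hTne, hTk, rfl⟩, rfl⟩
      obtain ⟨D', hD'sub, hD'card⟩ :=
        Finset.exists_subset_card_eq (s := (Finset.univ : Finset (Fin k))) (n := T.card)
          (by simpa using hTk)
      refine ⟨T.disjSum D', ?_, ?_, ?_⟩
      · rw [← Finset.card_pos, Finset.card_disjSum]
        have := Finset.card_pos.2 hTne
        omega
      · rw [alphaOf, cmax_extend]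
        simp only [Finset.toLeft_disjSum, Finset.toRight_disjSum, hD'card, max_self,
          Finset.card_disjSum]
        have hTpos : 0 < T.card := Finset.card_pos.2 hTne
        rw [div_le_div_iff₀ (by exact_mod_cast Nat.add_pos_left hTpos T.card) two_pos]
        push_cast
        linarith
      · rw [density, density, card_edgesIn_extend]
        simp only [Finset.toLeft_disjSum, Finset.card_disjSum, hD'card]
        have hTpos : (0 : ℝ) < T.card := by exact_mod_cast Finset.card_pos.2 hTne
        push_cast
        ring
  rw [hset, Real.sSup_smul_of_nonneg (by norm_num), smul_eq_mul]
end

section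
/- Let G = (V, E) be a finite simple undirected graph, ℓ : V → C a coloring, and k⃗ = (k_c)_{c∈C} a vector of nonnegative integers with k_c ≤ |V_c| for every c ∈ C and ‖k⃗‖₁ = Σ_{c∈C} k_c ≥ 1. Let OPT be the maximum of d(T) over all T ⊆ V feasible for Dal k⃗ S (i.e., |T_c| ≥ k_c for all c), and let γ ∈ [0,1]. If S ⊆ V satisfies |S| ≥ ‖k⃗‖₁ and d(S) ≥ γ · max{ d(T) : T ⊆ V, |T| ≥ ‖k⃗‖₁ }, then there exists S' with S ⊆ S' ⊆ V such that |S'_c| ≥ k_c for every c ∈ C and d(S') ≥ (γ/2) · OPT. -/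
open Finset

lemma density_nonneg {V : Type*} [Fintype V] [DecidableEq V] (G : SimpleGraph V)
    [DecidableRel G.Adj] (S : Finset V) : 0 ≤ density G S := by
  unfold density; positivity

lemma density_le_bound {V : Type*} [Fintype V] [DecidableEq V] (G : SimpleGraph V)
    [DecidableRel G.Adj] (S : Finset V) : density G S ≤ (G.edgeFinset.card : ℝ) := by
  unfold density
  rcases Nat.eq_zero_or_pos S.card with h | h
  · rw [h]; simp
  · rw [div_le_iff₀ (by exact_mod_cast h)]
    calc ((edgesIn G S).card : ℝ) ≤ (G.edgeFinset.card : ℝ) := by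
          exact_mod_cast Finset.card_le_card (Finset.filter_subset _ _)
      _ ≤ (G.edgeFinset.card : ℝ) * S.card := by
          nlinarith [Nat.one_le_cast (α := ℝ) |>.mpr h, Nat.cast_nonneg (α := ℝ) G.edgeFinset.card]

/-- Any `γ`-approximate solution to DalkS with `k = ‖k⃗‖₁` can be extended to a feasible
`(γ/2)`-approximate solution of Dal`k⃗`S. -/
theorem stmt2 {V C : Type*} [Fintype V] [DecidableEq V] [Fintype C] [DecidableEq C]
    (G : SimpleGraph V) [DecidableRel G.Adj] (ℓ : V → C) (k : C → ℕ)
    (hk : ∀ c : C, k c ≤ (colorClass ℓ Finset.univ c).card) (hk1 : 1 ≤ ∑ c : C, k c)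
    (γ : ℝ) (hγ0 : 0 ≤ γ) (hγ1 : γ ≤ 1)
    (S : Finset V) (hScard : ∑ c : C, k c ≤ S.card)
    (hSdens : γ * sSup {x : ℝ | ∃ T : Finset V, ∑ c : C, k c ≤ T.card ∧ density G T = x}
      ≤ density G S) :
    ∃ S' : Finset V, S ⊆ S' ∧ (∀ c : C, k c ≤ (colorClass ℓ S' c).card) ∧
      (γ / 2) * sSup {x : ℝ | ∃ T : Finset V, (∀ c : C, k c ≤ (colorClass ℓ T c).card) ∧
        density G T = x} ≤ density G S' := by
  -- choose extension sets per color
  have hex : ∀ c : C, ∃ A : Finset V, A ⊆ (colorClass ℓ Finset.univ c) \ S ∧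
      A.card = k c - (colorClass ℓ S c).card := by
    intro c
    apply Finset.exists_subset_card_eq
    have hcap : (colorClass ℓ Finset.univ c) ∩ S = colorClass ℓ S c := by
      ext v; simp [colorClass, and_comm]
    have := Finset.card_sdiff_add_card_inter (colorClass ℓ Finset.univ c) S
    rw [hcap] at this
    have h1 : (colorClass ℓ S c).card ≤ (colorClass ℓ Finset.univ c).card := by
      apply Finset.card_le_card
      intro v hv; simp [colorClass] at hv ⊢; exact hv.2
    have h2 := hk c
    omega
  choose A hA hAcard using hex
  set S' : Finset V := S ∪ Finset.univ.biUnion A with hS'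
  have hsub : S ⊆ S' := Finset.subset_union_left
  -- color feasibility
  have hcolor : ∀ c : C, k c ≤ (colorClass ℓ S' c).card := by
    intro c
    have hAc : A c ⊆ colorClass ℓ S' c := by
      intro v hv
      have hv' := hA c hv
      simp only [Finset.mem_sdiff] at hv'
      have : ℓ v = c := by simpa [colorClass] using hv'.1
      simp only [colorClass, Finset.mem_filter]
      refine ⟨Finset.mem_union_right _ ?_, this⟩
      exact Finset.mem_biUnion.mpr ⟨c, Finset.mem_univ c, hv⟩
    have hSc : colorClass ℓ S c ⊆ colorClass ℓ S' c := by
      intro v hv; simp only [colorClass, Finset.mem_filter] at hv ⊢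
      exact ⟨hsub hv.1, hv.2⟩
    have hdisj : Disjoint (colorClass ℓ S c) (A c) := by
      apply Finset.disjoint_left.mpr
      intro v hv hv'
      have := hA c hv'
      simp only [Finset.mem_sdiff] at this
      exact this.2 (Finset.mem_filter.mp hv).1
    have := Finset.card_le_card (Finset.union_subset hSc hAc)
    rw [Finset.card_union_of_disjoint hdisj, hAcard c] at this
    omega
  -- cardinality bound
  have hcard2 : (S'.card : ℕ) ≤ 2 * S.card := by
    have h1 : S'.card ≤ S.card + (Finset.univ.biUnion A).card := Finset.card_union_le _ _
    have h2 : (Finset.univ.biUnion A).card ≤ ∑ c : C, (A c).card := Finset.card_biUnion_le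
    have h3 : ∑ c : C, (A c).card ≤ ∑ c : C, k c := by
      apply Finset.sum_le_sum; intro c _; rw [hAcard c]; omega
    omega
  refine ⟨S', hsub, hcolor, ?_⟩
  -- Let Kset and Cset
  set Kset := {x : ℝ | ∃ T : Finset V, ∑ c : C, k c ≤ T.card ∧ density G T = x}
  set Cset := {x : ℝ | ∃ T : Finset V, (∀ c : C, k c ≤ (colorClass ℓ T c).card) ∧
      density G T = x}
  have hCsub : Cset ⊆ Kset := by
    rintro x ⟨T, hT, rfl⟩
    refine ⟨T, ?_, rfl⟩
    have hTcard : T.card = ∑ c : C, (colorClass ℓ T c).card := by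
      exact Finset.card_eq_sum_card_fiberwise (fun v _ => Finset.mem_univ (ℓ v))
    rw [hTcard]
    exact Finset.sum_le_sum (fun c _ => hT c)
  have hKbdd : BddAbove Kset := by
    refine ⟨(G.edgeFinset.card : ℝ), ?_⟩
    rintro x ⟨T, _, rfl⟩
    exact density_le_bound G T
  have hCne : Cset.Nonempty := ⟨density G Finset.univ, Finset.univ, hk, rfl⟩
  have hsup : sSup Cset ≤ sSup Kset := csSup_le_csSup hKbdd hCne hCsub
  -- density of S' vs density of S
  have hS1 : (1 : ℕ) ≤ S.card := le_trans hk1 hScard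
  have hSpos : (0 : ℝ) < S.card := by exact_mod_cast hS1
  have hS'pos : (0 : ℝ) < S'.card := by
    have : (1:ℕ) ≤ S'.card := le_trans hS1 (Finset.card_le_card hsub)
    exact_mod_cast this
  have hEsub : edgesIn G S ⊆ edgesIn G S' := by
    intro e he
    simp only [edgesIn, Finset.mem_filter] at he ⊢
    exact ⟨he.1, fun v hv => hsub (he.2 v hv)⟩
  have hE : ((edgesIn G S).card : ℝ) ≤ (edgesIn G S').card := by
    exact_mod_cast Finset.card_le_card hEsub
  have hcard2' : (S'.card : ℝ) ≤ 2 * S.card := by exact_mod_cast hcard2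
  have hhalf : density G S / 2 ≤ density G S' := by
    unfold density
    rw [div_div]
    exact div_le_div₀ (by positivity) hE hS'pos (by linarith)
  calc (γ / 2) * sSup Cset ≤ (γ / 2) * sSup Kset :=
        mul_le_mul_of_nonneg_left hsup (by linarith)
    _ = (γ * sSup Kset) / 2 := by ring
    _ ≤ density G S / 2 := by linarith
    _ ≤ density G S' := hhalf
end

section
/- Let G = (V, E) be a finite simple undirected graph with n = |V|, ℓ : V → C a coloring, and α a real number with 1/|C| ≤ α ≤ 1. Assume α(V) ≤ α. Then for every S ⊆ V with |S| ≥ ⌈1/α⌉ there exists T with S ⊆ T ⊆ V such that α(T) ≤ α, c_max(T) = c_max(S), and |T| ≤ min{⌈1/α⌉, α·n} · |S|. -/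
open Finset

section Aux

variable {V C : Type*} [Fintype V] [DecidableEq V] [Fintype C] [DecidableEq C]

lemma colorClass_mono (ℓ : V → C) {S T : Finset V} (h : S ⊆ T) (c : C) :
    colorClass ℓ S c ⊆ colorClass ℓ T c := Finset.filter_subset_filter _ h

lemma cmax_mono (ℓ : V → C) {S T : Finset V} (h : S ⊆ T) : cmax ℓ S ≤ cmax ℓ T :=
  Finset.sup_mono_fun fun c _ => Finset.card_le_card (colorClass_mono ℓ h c)

lemma cmax_le_card (ℓ : V → C) (S : Finset V) : cmax ℓ S ≤ S.card :=
  Finset.sup_le fun _ _ => Finset.card_le_card (Finset.filter_subset _ _)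

lemma colorClass_card_le_cmax (ℓ : V → C) (S : Finset V) (c : C) :
    (colorClass ℓ S c).card ≤ cmax ℓ S :=
  Finset.le_sup (f := fun c => (colorClass ℓ S c).card) (Finset.mem_univ c)

lemma one_le_cmax (ℓ : V → C) {S : Finset V} (h : S.Nonempty) : 1 ≤ cmax ℓ S := by
  obtain ⟨v, hv⟩ := h
  have : v ∈ colorClass ℓ S (ℓ v) := by simp [colorClass, hv]
  calc 1 ≤ (colorClass ℓ S (ℓ v)).card := Finset.card_pos.mpr ⟨v, this⟩
    _ ≤ cmax ℓ S := colorClass_card_le_cmax ℓ S (ℓ v)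

lemma card_eq_sum_colorClass (ℓ : V → C) (S : Finset V) :
    S.card = ∑ c, (colorClass ℓ S c).card :=
  Finset.card_eq_sum_card_fiberwise (fun x _ => Finset.mem_univ (ℓ x))

lemma step (ℓ : V → C) (α : ℝ) (hαpos : 0 < α) (m : ℕ)
    (hVc : ∀ c, ((colorClass ℓ univ c).card : ℝ) ≤ α * Fintype.card V)
    (hmαn : (m : ℝ) ≤ α * Fintype.card V)
    (S : Finset V) (hm : ∀ c, (colorClass ℓ S c).card ≤ m)
    (hsize : (S.card : ℝ) < (m : ℝ) / α) :
    ∃ v, v ∉ S ∧ ∀ c, (colorClass ℓ (insert v S) c).card ≤ m := by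
  have hn : 0 < (Fintype.card V : ℝ) := by
    by_contra h
    push_neg at h
    have h0 : (m : ℝ) ≤ 0 := hmαn.trans (by nlinarith)
    have : (m : ℝ) / α ≤ 0 := div_nonpos_of_nonpos_of_nonneg h0 hαpos.le
    have : (0 : ℝ) ≤ S.card := Nat.cast_nonneg _
    linarith
  have hαn : 0 < α * Fintype.card V := by positivity
  have key : ∃ c, (colorClass ℓ S c).card < min m (colorClass ℓ univ c).card := by
    by_contra h
    push_neg at h
    have hper : ∀ c, ((m : ℝ) / (α * Fintype.card V)) * (colorClass ℓ univ c).card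
        ≤ ((colorClass ℓ S c).card : ℝ) := by
      intro c
      have h1 : ((min m (colorClass ℓ univ c).card : ℕ) : ℝ) ≤ (colorClass ℓ S c).card := by
        exact_mod_cast h c
      rw [Nat.cast_min] at h1
      refine le_trans (le_min ?_ ?_) h1
      · calc ((m : ℝ) / (α * Fintype.card V)) * (colorClass ℓ univ c).card
            ≤ ((m : ℝ) / (α * Fintype.card V)) * (α * Fintype.card V) := by
              apply mul_le_mul_of_nonneg_left (hVc c) (by positivity)
          _ = m := by field_simp
      · have hc1 : (m : ℝ) / (α * Fintype.card V) ≤ 1 := by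
          rw [div_le_one hαn]; exact hmαn
        calc ((m : ℝ) / (α * Fintype.card V)) * (colorClass ℓ univ c).card
            ≤ 1 * (colorClass ℓ univ c).card := by
              apply mul_le_mul_of_nonneg_right hc1 (Nat.cast_nonneg _)
          _ = _ := one_mul _
    have hsum : (m : ℝ) / α ≤ (S.card : ℝ) := by
      have e1 : ((Fintype.card V : ℕ) : ℝ) = ∑ c, ((colorClass ℓ univ c).card : ℝ) := by
        rw [← Finset.card_univ, card_eq_sum_colorClass ℓ univ]
        push_cast; ring
      have e2 : (S.card : ℝ) = ∑ c, ((colorClass ℓ S c).card : ℝ) := by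
        rw [card_eq_sum_colorClass ℓ S]; push_cast; ring
      calc (m : ℝ) / α = ((m : ℝ) / (α * Fintype.card V)) * Fintype.card V := by
            field_simp
        _ = ∑ c, ((m : ℝ) / (α * Fintype.card V)) * (colorClass ℓ univ c).card := by
            rw [← Finset.mul_sum, ← e1]
        _ ≤ ∑ c, ((colorClass ℓ S c).card : ℝ) := Finset.sum_le_sum fun c _ => hper c
        _ = S.card := e2.symm
    linarith
  obtain ⟨c, hc⟩ := key
  have hcm : (colorClass ℓ S c).card < m := lt_of_lt_of_le hc (min_le_left _ _)
  have hcV : (colorClass ℓ S c).card < (colorClass ℓ univ c).card :=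
    lt_of_lt_of_le hc (min_le_right _ _)
  have hsub : colorClass ℓ S c ⊆ colorClass ℓ univ c := colorClass_mono ℓ (Finset.subset_univ S) c
  have hss : colorClass ℓ S c ⊂ colorClass ℓ univ c :=
    Finset.ssubset_iff_subset_ne.mpr ⟨hsub, fun h => by rw [h] at hcV; exact lt_irrefl _ hcV⟩
  obtain ⟨v, hvV, hvS⟩ := Finset.exists_of_ssubset hss
  have hℓv : ℓ v = c := (Finset.mem_filter.mp hvV).2
  have hvnS : v ∉ S := fun h => hvS (Finset.mem_filter.mpr ⟨h, hℓv⟩)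
  refine ⟨v, hvnS, fun c' => ?_⟩
  rw [colorClass, Finset.filter_insert]
  split_ifs with hcc
  · have : c' = c := hcc ▸ hℓv ▸ rfl
    subst this
    calc (insert v (S.filter fun v => ℓ v = c')).card
        ≤ (S.filter fun v => ℓ v = c').card + 1 := Finset.card_insert_le _ _
      _ ≤ m := by have := hcm; simp only [colorClass] at this; omega
  · exact hm c'

lemma grow (ℓ : V → C) (α : ℝ) (hαpos : 0 < α) (m : ℕ)
    (hVc : ∀ c, ((colorClass ℓ univ c).card : ℝ) ≤ α * Fintype.card V)
    (hmαn : (m : ℝ) ≤ α * Fintype.card V) (j : ℕ) :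
    ∀ S : Finset V, (∀ c, (colorClass ℓ S c).card ≤ m) →
      ∃ T, S ⊆ T ∧ (∀ c, (colorClass ℓ T c).card ≤ m) ∧ T.card ≤ S.card + j ∧
        ((m : ℝ) / α ≤ T.card ∨ T.card = S.card + j) := by
  induction j with
  | zero => exact fun S hS => ⟨S, subset_rfl, hS, le_rfl, Or.inr rfl⟩
  | succ j ih =>
    intro S hS
    obtain ⟨T, hST, hTm, hTcard, hd⟩ := ih S hS
    by_cases hc : (m : ℝ) / α ≤ T.card
    · exact ⟨T, hST, hTm, hTcard.trans (by omega), Or.inl hc⟩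
    · push_neg at hc
      obtain ⟨v, hv, hvm⟩ := step ℓ α hαpos m hVc hmαn T hTm hc
      refine ⟨insert v T, hST.trans (Finset.subset_insert _ _), hvm, ?_, ?_⟩
      · rw [Finset.card_insert_of_notMem hv]; omega
      · right
        rw [Finset.card_insert_of_notMem hv]
        rcases hd with h | h
        · exact absurd h (not_le.mpr hc)
        · omega

end Aux

/-- If `V` itself is diverse, every `S` with `|S| ≥ ⌈1/α⌉` extends to a diverse superset `T`
with `c_max(T) = c_max(S)` and `|T| ≤ min{⌈1/α⌉, αn}·|S|`. -/
theorem stmt4 {V C : Type*} [Fintype V] [DecidableEq V] [Fintype C] [DecidableEq C]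
    (G : SimpleGraph V) [DecidableRel G.Adj] (ℓ : V → C) (α : ℝ)
    (hα₁ : 1 / (Fintype.card C : ℝ) ≤ α) (hα₂ : α ≤ 1)
    (hV : alphaOf ℓ (Finset.univ : Finset V) ≤ α)
    (S : Finset V) (hS : ⌈1 / α⌉₊ ≤ S.card) :
    ∃ T : Finset V, S ⊆ T ∧ alphaOf ℓ T ≤ α ∧ cmax ℓ T = cmax ℓ S ∧
      (T.card : ℝ) ≤ min ((⌈1 / α⌉₊ : ℝ)) (α * Fintype.card V) * S.card := by
  rcases Nat.eq_zero_or_pos (Fintype.card C) with hC | hC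
  · -- C is empty, hence V is empty
    have hCe : IsEmpty C := Fintype.card_eq_zero_iff.mp hC
    have hVe : IsEmpty V := ⟨fun v => hCe.false (ℓ v)⟩
    have hSe : S = ∅ := Finset.eq_empty_of_isEmpty S
    have hα0 : (0 : ℝ) ≤ α := by
      rw [hC] at hα₁; simpa using hα₁
    refine ⟨∅, by simp [hSe], ?_, by rw [hSe], ?_⟩
    · simp only [alphaOf, Finset.card_empty, Nat.cast_zero, div_zero]
      exact hα0
    · simp
  · -- main case
    have hαpos : 0 < α := lt_of_lt_of_le (by positivity) hα₁
    have hS1 : 1 ≤ S.card := by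
      have : 1 ≤ ⌈1 / α⌉₊ := Nat.one_le_ceil_iff.mpr (by positivity)
      omega
    have hSne : S.Nonempty := Finset.card_pos.mp hS1
    have hVne : (Finset.univ : Finset V).Nonempty :=
      ⟨hSne.choose, Finset.mem_univ _⟩
    have hn : 0 < Fintype.card V := Fintype.card_pos_iff.mpr ⟨hSne.choose⟩
    have hnR : (0 : ℝ) < Fintype.card V := by exact_mod_cast hn
    have hcu : ((cmax ℓ (univ : Finset V)) : ℝ) ≤ α * Fintype.card V := by
      have := hV
      rw [alphaOf, Finset.card_univ, div_le_iff₀ hnR] at this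
      exact this
    have hVc : ∀ c, ((colorClass ℓ (univ : Finset V) c).card : ℝ) ≤ α * Fintype.card V :=
      fun c => le_trans (by exact_mod_cast colorClass_card_le_cmax ℓ univ c) hcu
    set m := cmax ℓ S with hm_def
    have hm : ∀ c, (colorClass ℓ S c).card ≤ m := colorClass_card_le_cmax ℓ S
    have hmαn : (m : ℝ) ≤ α * Fintype.card V :=
      le_trans (by exact_mod_cast cmax_mono ℓ (Finset.subset_univ S)) hcu
    have hαn1 : (1 : ℝ) ≤ α * Fintype.card V :=
      le_trans (by exact_mod_cast one_le_cmax ℓ hVne) hcu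
    obtain ⟨T, hST, hTm, hTcard, hd⟩ :=
      grow ℓ α hαpos m hVc hmαn (⌈(m : ℝ) / α⌉₊ - S.card) S hm
    have hTge : (m : ℝ) / α ≤ T.card := by
      rcases hd with h | h
      · exact h
      · have h1 : ⌈(m : ℝ) / α⌉₊ ≤ T.card := by omega
        calc (m : ℝ) / α ≤ (⌈(m : ℝ) / α⌉₊ : ℝ) := Nat.le_ceil _
          _ ≤ T.card := by exact_mod_cast h1
    have hm1 : 1 ≤ m := one_le_cmax ℓ hSne
    have hTpos : 0 < T.card := hS1.trans (Finset.card_le_card hST)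
    have hTposR : (0 : ℝ) < T.card := by exact_mod_cast hTpos
    have hcmaxT : cmax ℓ T = m :=
      le_antisymm (Finset.sup_le fun c _ => hTm c) (cmax_mono ℓ hST)
    have hmS : m ≤ S.card := cmax_le_card ℓ S
    refine ⟨T, hST, ?_, hcmaxT, ?_⟩
    · rw [alphaOf, hcmaxT, div_le_iff₀ hTposR]
      rw [div_le_iff₀ hαpos] at hTge
      linarith [hTge]
    · -- size bound
      have hTle : T.card ≤ max S.card ⌈(m : ℝ) / α⌉₊ := by omega
      have hceil1 : 1 ≤ ⌈1 / α⌉₊ := Nat.one_le_ceil_iff.mpr (by positivity)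
      have hSceil : (1 : ℝ) / α ≤ S.card :=
        le_trans (Nat.le_ceil _) (by exact_mod_cast hS)
      have hαS1 : (1 : ℝ) ≤ α * S.card := by
        rw [div_le_iff₀ hαpos] at hSceil; linarith
      rw [min_mul_of_nonneg _ _ (by positivity : (0:ℝ) ≤ (S.card : ℝ)), le_min_iff]
      constructor
      · -- ≤ ⌈1/α⌉ * |S|
        have hnat : T.card ≤ ⌈1 / α⌉₊ * S.card := by
          have h1 : ⌈(m : ℝ) / α⌉₊ ≤ m * ⌈1 / α⌉₊ := by
            apply Nat.ceil_le.mpr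
            calc (m : ℝ) / α = m * (1 / α) := by ring
              _ ≤ m * ⌈1 / α⌉₊ :=
                mul_le_mul_of_nonneg_left (Nat.le_ceil _) (Nat.cast_nonneg _)
              _ = ((m * ⌈1 / α⌉₊ : ℕ) : ℝ) := by push_cast; ring
          have h2 : m * ⌈1 / α⌉₊ ≤ S.card * ⌈1 / α⌉₊ := Nat.mul_le_mul_right _ hmS
          refine hTle.trans (max_le (Nat.le_mul_of_pos_left _ hceil1) ?_)
          calc ⌈(m : ℝ) / α⌉₊ ≤ m * ⌈1 / α⌉₊ := h1
            _ ≤ S.card * ⌈1 / α⌉₊ := h2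
            _ = ⌈1 / α⌉₊ * S.card := Nat.mul_comm _ _
        exact_mod_cast hnat
      · -- ≤ αn * |S|
        have h1 : (⌈(m : ℝ) / α⌉₊ : ℝ) ≤ Fintype.card V := by
          have : ⌈(m : ℝ) / α⌉₊ ≤ Fintype.card V := by
            apply Nat.ceil_le.mpr
            rw [div_le_iff₀ hαpos]
            linarith [hmαn]
          exact_mod_cast this
        have h2 : (Fintype.card V : ℝ) ≤ α * Fintype.card V * S.card := by
          calc (Fintype.card V : ℝ) = Fintype.card V * 1 := (mul_one _).symm
            _ ≤ Fintype.card V * (α * S.card) :=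
              mul_le_mul_of_nonneg_left hαS1 (Nat.cast_nonneg _)
            _ = α * Fintype.card V * S.card := by ring
        have h3 : (S.card : ℝ) ≤ α * Fintype.card V * S.card := by
          calc (S.card : ℝ) = 1 * S.card := (one_mul _).symm
            _ ≤ (α * Fintype.card V) * S.card :=
              mul_le_mul_of_nonneg_right hαn1 (Nat.cast_nonneg _)
        have hTleR : (T.card : ℝ) ≤ max (S.card : ℝ) (⌈(m : ℝ) / α⌉₊ : ℝ) := by
          have : ((T.card : ℕ) : ℝ) ≤ ((max S.card ⌈(m : ℝ) / α⌉₊ : ℕ) : ℝ) := by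
            exact_mod_cast hTle
          rwa [Nat.cast_max] at this
        exact hTleR.trans (max_le h3 (h1.trans h2))
end

section
/- Let G = (V, E) be a finite simple undirected graph with n = |V|, ℓ : V → C a coloring, α a real number with 1/|C| ≤ α ≤ 1, and γ ∈ [0,1]. Assume α(V) ≤ α, and let OPT = max{ d(T) : ∅ ≠ T ⊆ V, α(T) ≤ α }. If S ⊆ V satisfies |S| ≥ ⌈1/α⌉ and d(S) ≥ γ · max{ d(T) : T ⊆ V, |T| ≥ ⌈1/α⌉ }, then there exists T with S ⊆ T ⊆ V such that α(T) ≤ α and d(T) ≥ γ · max{ 1/⌈1/α⌉, 1/(α·n) } · OPT. -/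
open Finset

/-- Approximation guarantee of Algorithm 2: a `γ`-approximate solution to DalkS with
`k = ⌈1/α⌉` extends to a diverse set `T` with
`d(T) ≥ γ · max{1/⌈1/α⌉, 1/(αn)} · OPT`. -/
theorem stmt5 {V C : Type*} [Fintype V] [DecidableEq V] [Fintype C] [DecidableEq C]
    (G : SimpleGraph V) [DecidableRel G.Adj] (ℓ : V → C) (α : ℝ)
    (hα₁ : 1 / (Fintype.card C : ℝ) ≤ α) (hα₂ : α ≤ 1)
    (γ : ℝ) (hγ0 : 0 ≤ γ) (hγ1 : γ ≤ 1)
    (hV : alphaOf ℓ (Finset.univ : Finset V) ≤ α)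
    (S : Finset V) (hScard : ⌈1 / α⌉₊ ≤ S.card)
    (hSdens : γ * sSup {x : ℝ | ∃ T : Finset V, ⌈1 / α⌉₊ ≤ T.card ∧ density G T = x}
      ≤ density G S) :
    ∃ T : Finset V, S ⊆ T ∧ alphaOf ℓ T ≤ α ∧
      γ * max (1 / (⌈1 / α⌉₊ : ℝ)) (1 / (α * Fintype.card V)) *
        sSup {x : ℝ | ∃ T' : Finset V, T'.Nonempty ∧ alphaOf ℓ T' ≤ α ∧ density G T' = x}
      ≤ density G T := by
  classical
  by_cases hVne : Nonempty V
  case neg =>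
    -- V is empty
    have hVemp : IsEmpty V := not_nonempty_iff.mp hVne
    refine ⟨∅, by simp [Finset.eq_empty_of_isEmpty S], ?_, ?_⟩
    · simp [alphaOf, cmax, colorClass]
      exact le_trans (by positivity) hα₁
    · have hBemp : {x : ℝ | ∃ T' : Finset V, T'.Nonempty ∧ alphaOf ℓ T' ≤ α ∧ density G T' = x}
          = ∅ := by
        ext x; simp only [Set.mem_setOf_eq, Set.mem_empty_iff_false, iff_false]
        rintro ⟨T', ⟨v, -⟩, -⟩; exact hVemp.elim v
      rw [hBemp, Real.sSup_empty, mul_zero]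
      simp [density]
  -- main case: V nonempty
  have hC : Nonempty C := ⟨ℓ (Classical.arbitrary V)⟩
  have hcardC : 0 < (Fintype.card C : ℝ) := by exact_mod_cast Fintype.card_pos
  have hαpos : 0 < α := lt_of_lt_of_le (by positivity) hα₁
  set n : ℕ := Fintype.card V with hn_def
  have hn : 0 < n := Fintype.card_pos
  have hnR : (0:ℝ) < n := by exact_mod_cast hn
  set k : ℕ := ⌈1 / α⌉₊ with hk_def
  have hk1 : 1 ≤ k := Nat.one_le_ceil_iff.mpr (by positivity)
  have hkR : (0:ℝ) < k := by exact_mod_cast hk1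
  have hSne : S.Nonempty := Finset.card_pos.mp (lt_of_lt_of_le hk1 hScard)
  have hS0 : (0:ℝ) < S.card := by exact_mod_cast Finset.card_pos.mpr hSne
  -- cmax of univ
  have huniv : (Finset.univ : Finset V).card = n := Finset.card_univ
  have hcmaxV : (cmax ℓ (Finset.univ : Finset V) : ℝ) ≤ α * n := by
    have := hV
    unfold alphaOf at this
    rw [huniv] at this
    calc (cmax ℓ (Finset.univ : Finset V) : ℝ)
        = ((cmax ℓ (Finset.univ : Finset V) : ℝ) / n) * n := by field_simp
      _ ≤ α * n := by exact mul_le_mul_of_nonneg_right this (le_of_lt hnR)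
  have le_cmax : ∀ (W : Finset V) (c : C), (colorClass ℓ W c).card ≤ cmax ℓ W := fun W c =>
    Finset.le_sup (f := fun c => (colorClass ℓ W c).card) (Finset.mem_univ c)
  have hclassV : ∀ c : C, ((colorClass ℓ Finset.univ c).card : ℝ) ≤ α * n := by
    intro c
    refine le_trans ?_ hcmaxV
    exact_mod_cast le_cmax Finset.univ c
  set m : ℕ := cmax ℓ S with hm_def
  have hmS : ∀ c : C, (colorClass ℓ S c).card ≤ m := fun c => le_cmax S c
  have hm1 : 1 ≤ m := by
    obtain ⟨v, hv⟩ := hSne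
    have : v ∈ colorClass ℓ S (ℓ v) := Finset.mem_filter.mpr ⟨hv, rfl⟩
    calc 1 ≤ (colorClass ℓ S (ℓ v)).card := Finset.card_pos.mpr ⟨v, this⟩
      _ ≤ m := hmS _
  have hmcard : m ≤ S.card := Finset.sup_le fun c _ =>
    Finset.card_le_card (Finset.filter_subset _ _)
  have hSsubclass : ∀ c : C, colorClass ℓ S c ⊆ colorClass ℓ Finset.univ c := fun c =>
    Finset.filter_subset_filter _ (Finset.subset_univ S)
  have hmn : (m : ℝ) ≤ α * n := by
    refine le_trans ?_ hcmaxV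
    have : m ≤ cmax ℓ (Finset.univ : Finset V) :=
      Finset.sup_le fun c _ => le_trans (Finset.card_le_card (hSsubclass c)) (le_cmax Finset.univ c)
    exact_mod_cast this
  -- construct per-color supersets
  have hUcex : ∀ c : C, ∃ u : Finset V, colorClass ℓ S c ⊆ u ∧
      u ⊆ colorClass ℓ Finset.univ c ∧
      u.card = min (colorClass ℓ Finset.univ c).card m := fun c =>
    Finset.exists_subsuperset_card_eq (hSsubclass c)
      (le_min (Finset.card_le_card (hSsubclass c)) (hmS c)) (min_le_left _ _)
  choose Uc hUc1 hUc2 hUc3 using hUcex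
  have hUcdisj : ∀ c₁ ∈ (Finset.univ : Finset C), ∀ c₂ ∈ (Finset.univ : Finset C),
      c₁ ≠ c₂ → Disjoint (Uc c₁) (Uc c₂) := by
    intro c₁ _ c₂ _ hne
    rw [Finset.disjoint_left]
    intro v hv1 hv2
    have h1 : ℓ v = c₁ := (Finset.mem_filter.mp (hUc2 c₁ hv1)).2
    have h2 : ℓ v = c₂ := (Finset.mem_filter.mp (hUc2 c₂ hv2)).2
    exact hne (h1 ▸ h2)
  set U : Finset V := Finset.univ.biUnion Uc with hU_def
  have hUcard : U.card = ∑ c : C, min (colorClass ℓ Finset.univ c).card m := by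
    rw [hU_def, Finset.card_biUnion hUcdisj]
    exact Finset.sum_congr rfl fun c _ => hUc3 c
  have hSU : S ⊆ U := by
    intro v hv
    exact Finset.mem_biUnion.mpr ⟨ℓ v, Finset.mem_univ _,
      hUc1 (ℓ v) (Finset.mem_filter.mpr ⟨hv, rfl⟩)⟩
  have hsumV : ∑ c : C, (colorClass ℓ Finset.univ c).card = n := by
    rw [← huniv]
    exact (Finset.card_eq_sum_card_fiberwise (fun v _ => Finset.mem_univ (ℓ v))).symm
  have hUn : U.card ≤ n := by
    rw [hUcard, ← hsumV]
    exact Finset.sum_le_sum fun c _ => min_le_left _ _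
  -- key inequality
  have hkey : (m : ℝ) / α ≤ (U.card : ℝ) := by
    have hαn : (0:ℝ) < α * n := by positivity
    have hterm : ∀ c : C, ((colorClass ℓ Finset.univ c).card : ℝ) * ((m:ℝ)/(α*n))
        ≤ ((min (colorClass ℓ Finset.univ c).card m : ℕ) : ℝ) := by
      intro c
      rw [Nat.cast_min]
      rcases le_total ((colorClass ℓ Finset.univ c).card : ℝ) (m : ℝ) with h | h
      · rw [min_eq_left h]
        exact mul_le_of_le_one_right (Nat.cast_nonneg _) ((div_le_one hαn).mpr hmn)
      · rw [min_eq_right h]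
        calc ((colorClass ℓ Finset.univ c).card : ℝ) * ((m:ℝ)/(α*n))
            = (((colorClass ℓ Finset.univ c).card : ℝ)/(α*n)) * m := by ring
          _ ≤ 1 * m := by
              exact mul_le_mul_of_nonneg_right ((div_le_one hαn).mpr (hclassV c))
                (Nat.cast_nonneg m)
          _ = m := one_mul _
    calc (m : ℝ) / α = (n : ℝ) * ((m:ℝ)/(α*n)) := by field_simp
      _ = ∑ c : C, ((colorClass ℓ Finset.univ c).card : ℝ) * ((m:ℝ)/(α*n)) := by
          rw [← Finset.sum_mul]
          congr 1
          exact_mod_cast (congrArg Nat.cast hsumV).symm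
      _ ≤ ∑ c : C, ((min (colorClass ℓ Finset.univ c).card m : ℕ) : ℝ) :=
          Finset.sum_le_sum fun c _ => hterm c
      _ = (U.card : ℝ) := by rw [hUcard]; push_cast; ring
  -- choose T
  set N : ℕ := max S.card ⌈(m : ℝ) / α⌉₊ with hN_def
  have hNU : N ≤ U.card := max_le (Finset.card_le_card hSU) (Nat.ceil_le.mpr hkey)
  obtain ⟨T, hST, hTU, hTcard⟩ :=
    Finset.exists_subsuperset_card_eq hSU (le_max_left _ _) hNU
  have hT0 : (0:ℝ) < T.card := by
    have : S.card ≤ T.card := Finset.card_le_card hST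
    have : (0:ℝ) < S.card := hS0
    exact lt_of_lt_of_le hS0 (by exact_mod_cast Finset.card_le_card hST)
  -- alphaOf T ≤ α
  have hTclass : ∀ c : C, colorClass ℓ T c ⊆ Uc c := by
    intro c v hv
    obtain ⟨hvT, hvc⟩ := Finset.mem_filter.mp hv
    obtain ⟨c', -, hvc'⟩ := Finset.mem_biUnion.mp (hTU hvT)
    have h1 : ℓ v = c' := (Finset.mem_filter.mp (hUc2 c' hvc')).2
    rwa [show c' = c by rw [← h1, hvc]] at hvc'
  have hcmaxT : cmax ℓ T ≤ m := Finset.sup_le fun c _ =>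
    le_trans (Finset.card_le_card (hTclass c)) ((hUc3 c) ▸ min_le_right _ _)
  have hmT : (m : ℝ) ≤ α * T.card := by
    have h1 : (m : ℝ) / α ≤ (T.card : ℝ) := by
      refine le_trans (Nat.le_ceil _) ?_
      exact_mod_cast hTcard ▸ le_max_right S.card ⌈(m : ℝ) / α⌉₊
    calc (m : ℝ) = α * ((m:ℝ)/α) := by field_simp
      _ ≤ α * T.card := mul_le_mul_of_nonneg_left h1 (le_of_lt hαpos)
  have halphaT : alphaOf ℓ T ≤ α := by
    unfold alphaOf
    rw [div_le_iff₀ hT0]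
    calc (cmax ℓ T : ℝ) ≤ m := by exact_mod_cast hcmaxT
      _ ≤ α * T.card := hmT
      _ = α * T.card := rfl
  refine ⟨T, hST, halphaT, ?_⟩
  -- size bounds
  have hkceil : 1 / α ≤ (k : ℝ) := Nat.le_ceil _
  have hSk : (k : ℝ) ≤ (S.card : ℝ) := by exact_mod_cast hScard
  have hαS : 1 ≤ α * S.card := by
    have := le_trans hkceil hSk
    calc (1:ℝ) = α * (1/α) := by field_simp
      _ ≤ α * S.card := mul_le_mul_of_nonneg_left this (le_of_lt hαpos)
  have hTk : (T.card : ℝ) ≤ k * S.card := by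
    have h2 : ((m : ℝ)) / α ≤ k * S.card := by
      calc (m : ℝ) / α = m * (1/α) := by ring
        _ ≤ S.card * k := mul_le_mul (by exact_mod_cast hmcard) hkceil
            (by positivity) (le_of_lt hS0)
        _ = k * S.card := by ring
    have : N ≤ k * S.card := by
      refine max_le ?_ (Nat.ceil_le.mpr (le_trans h2 (by push_cast; ring_nf; rfl)))
      calc S.card = 1 * S.card := (one_mul _).symm
        _ ≤ k * S.card := Nat.mul_le_mul_right _ hk1
    rw [hTcard]
    push_cast
    exact_mod_cast this
  have hTαn : (T.card : ℝ) ≤ α * n * S.card := by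
    have h1 : (T.card : ℝ) ≤ n := by
      rw [hTcard]; exact_mod_cast le_trans hNU hUn
    calc (T.card : ℝ) ≤ n := h1
      _ = n * 1 := (mul_one _).symm
      _ ≤ n * (α * S.card) := mul_le_mul_of_nonneg_left hαS (le_of_lt hnR)
      _ = α * n * S.card := by ring
  -- sSup comparison
  set A : Set ℝ := {x : ℝ | ∃ T : Finset V, k ≤ T.card ∧ density G T = x} with hA_def
  set B : Set ℝ := {x : ℝ | ∃ T' : Finset V, T'.Nonempty ∧ alphaOf ℓ T' ≤ α ∧ density G T' = x}
    with hB_def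
  have hA_bdd : BddAbove A := Set.Finite.bddAbove
    (Set.Finite.subset (Set.finite_range (density G)) (by rintro x ⟨T, -, h⟩; exact ⟨T, h⟩))
  have hBsubA : B ⊆ A := by
    rintro x ⟨T', hne, hαT', rfl⟩
    refine ⟨T', ?_, rfl⟩
    have hT'0 : (0:ℝ) < T'.card := by exact_mod_cast Finset.card_pos.mpr hne
    have hc1 : 1 ≤ cmax ℓ T' := by
      obtain ⟨v, hv⟩ := hne
      calc 1 ≤ (colorClass ℓ T' (ℓ v)).card :=
            Finset.card_pos.mpr ⟨v, Finset.mem_filter.mpr ⟨hv, rfl⟩⟩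
        _ ≤ cmax ℓ T' := le_cmax T' _
    have : (1:ℝ) ≤ α * T'.card := by
      unfold alphaOf at hαT'
      rw [div_le_iff₀ hT'0] at hαT'
      exact le_trans (by exact_mod_cast hc1) hαT'
    refine Nat.ceil_le.mpr ?_
    rw [div_le_iff₀ hαpos]
    linarith [mul_comm α (T'.card : ℝ)]
  have hBne : B.Nonempty := ⟨density G Finset.univ, Finset.univ, Finset.univ_nonempty, hV, rfl⟩
  have hsupBA : sSup B ≤ sSup A := csSup_le_csSup hA_bdd hBne hBsubA
  -- final chain
  have hdSnn : 0 ≤ density G S := by unfold density; positivity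
  have hedge : ((edgesIn G S).card : ℝ) ≤ ((edgesIn G T).card : ℝ) := by
    have : edgesIn G S ⊆ edgesIn G T :=
      Finset.monotone_filter_right _ (fun e _ h v hv => hST (h v hv))
    exact_mod_cast Finset.card_le_card this
  set M : ℝ := max (1 / (k : ℝ)) (1 / (α * n)) with hM_def
  have hMnn : 0 ≤ M := le_trans (by positivity : (0:ℝ) ≤ 1 / (k:ℝ)) (le_max_left _ _)
  have hM : M ≤ (S.card : ℝ) / (T.card : ℝ) := by
    refine max_le ?_ ?_
    · rw [div_le_div_iff₀ hkR hT0]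
      linarith [hTk]
    · rw [div_le_div_iff₀ (by positivity) hT0]
      linarith [hTαn]
  calc γ * M * sSup B ≤ γ * M * sSup A :=
        mul_le_mul_of_nonneg_left hsupBA (mul_nonneg hγ0 hMnn)
    _ = M * (γ * sSup A) := by ring
    _ ≤ M * density G S := mul_le_mul_of_nonneg_left hSdens hMnn
    _ ≤ ((S.card : ℝ) / (T.card : ℝ)) * density G S :=
        mul_le_mul_of_nonneg_right hM hdSnn
    _ = ((edgesIn G S).card : ℝ) / T.card := by
        unfold density
        rw [div_mul_div_comm, mul_comm ((T.card : ℝ)) ((S.card : ℝ)),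
          mul_div_mul_left _ _ (ne_of_gt hS0)]
    _ ≤ ((edgesIn G T).card : ℝ) / T.card := by gcongr
    _ = density G T := rfl
end

section
/- Let G = (V, E) be a finite simple undirected graph, ℓ : V → C a coloring, and p = (p_c)_{c∈C} ∈ ℤ_{≥0}^{|C|} with ‖p‖₁ ≥ 1. For every S ⊆ V with |S_c| = p_c for every c ∈ C, there exists a feasible solution (x, y) of LP(p) whose objective value Σ_{e∈E} x_e is greater than or equal to d(S). -/
open Finset

/-- Feasibility for the linear program `LP(p)`: `x_e ≤ y_u, x_e ≤ y_v` for every edge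
`e = {u,v}`; `∑_{v ∈ V_c} y_v = p_c/‖p‖₁` for every color `c`; `y_v ≤ 1/‖p‖₁`; and
`x, y ≥ 0`. -/
def LPFeasible {V C : Type*} [Fintype V] [DecidableEq V] [Fintype C] [DecidableEq C]
    (G : SimpleGraph V) [DecidableRel G.Adj] (ℓ : V → C) (p : C → ℕ)
    (x : Sym2 V → ℝ) (y : V → ℝ) : Prop :=
  (∀ e ∈ G.edgeFinset, ∀ v ∈ e, x e ≤ y v) ∧
  (∀ c : C, ∑ v ∈ Finset.univ.filter (fun v => ℓ v = c), y v
      = (p c : ℝ) / ((∑ c' : C, p c' : ℕ) : ℝ)) ∧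
  (∀ v : V, y v ≤ 1 / ((∑ c' : C, p c' : ℕ) : ℝ)) ∧
  (∀ e ∈ G.edgeFinset, 0 ≤ x e) ∧
  (∀ v : V, 0 ≤ y v)

/-- For every `S ⊆ V` with `|S_c| = p_c` for each color `c`, there is a feasible solution of
`LP(p)` whose objective value is at least `d(S)`. -/
theorem stmt8 {V C : Type*} [Fintype V] [DecidableEq V] [Fintype C] [DecidableEq C]
    (G : SimpleGraph V) [DecidableRel G.Adj] (ℓ : V → C) (p : C → ℕ)
    (hp : 1 ≤ ∑ c : C, p c)
    (S : Finset V) (hS : ∀ c : C, (colorClass ℓ S c).card = p c) :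
    ∃ (x : Sym2 V → ℝ) (y : V → ℝ), LPFeasible G ℓ p x y ∧
      density G S ≤ ∑ e ∈ G.edgeFinset, x e := by
  set n : ℕ := ∑ c : C, p c with hn
  have hn0 : (0:ℝ) < (n:ℝ) := by exact_mod_cast hp
  have hScard : S.card = n := by
    rw [hn]
    have := Finset.card_eq_sum_card_fiberwise (f := ℓ) (s := S) (t := Finset.univ)
      (fun x _ => Finset.mem_univ _)
    rw [this]
    exact Finset.sum_congr rfl fun c _ => hS c
  refine ⟨fun e => if e ∈ edgesIn G S then 1/(n:ℝ) else 0,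
          fun v => if v ∈ S then 1/(n:ℝ) else 0, ⟨?_, ?_, ?_, ?_, ?_⟩, ?_⟩
  · intro e he v hv
    dsimp only
    split_ifs with h1 h2
    · exact le_refl _
    · exact absurd ((Finset.mem_filter.mp h1).2 v hv) h2
    all_goals positivity
  · intro c
    dsimp only
    rw [← Finset.sum_filter]
    have : (Finset.filter (fun v => v ∈ S) (Finset.filter (fun v => ℓ v = c) Finset.univ))
        = colorClass ℓ S c := by
      ext v
      simp [colorClass, Finset.mem_filter, and_comm]
    rw [Finset.sum_const, this, hS c, nsmul_eq_mul]
    ring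
  · intro v
    dsimp only
    split_ifs
    · exact le_refl _
    · positivity
  · intro e _
    dsimp only
    split_ifs <;> positivity
  · intro v
    dsimp only
    split_ifs <;> positivity
  · dsimp only
    rw [← Finset.sum_filter]
    have hsub : Finset.filter (fun e => e ∈ edgesIn G S) G.edgeFinset = edgesIn G S := by
      ext e
      simp only [Finset.mem_filter, edgesIn, and_iff_right_iff_imp]
      exact fun he => he.1
    rw [hsub, Finset.sum_const, nsmul_eq_mul, density, hScard]
    rw [div_le_iff₀ hn0]
    field_simp
    exact le_refl _
end

section
/- Let G = (V, E) be a finite simple undirected graph, ℓ : V → C a coloring, and k⃗ = (k_c)_{c∈C} ∈ ℤ_{≥0}^{|C|} with k_c ≤ |V_c| for every c ∈ C and k_c ≥ 1 for some c ∈ C. Let S* ⊆ V be an optimal solution to Dal k⃗ S, let p*_c = |S*_c| for each c ∈ C, and let (x*, y*) be an optimal solution to LP(p*). Then there exist r ∈ {y*_v : v ∈ V} ∪ {0} and S' with S(r) ⊆ S' ⊆ V, where S(r) = {v ∈ V : y*_v ≥ r}, such that |S'_c| ≥ k_c for every c ∈ C and d(S') ≥ d(S*)/3 (i.e., S' is a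 1/3-approximate solution to Dal k⃗ S). -/
open Finset

lemma edgesIn_mono {V : Type*} [Fintype V] [DecidableEq V] (G : SimpleGraph V)
    [DecidableRel G.Adj] {S T : Finset V} (h : S ⊆ T) : edgesIn G S ⊆ edgesIn G T := by
  intro e he
  simp only [edgesIn, mem_filter] at he ⊢
  exact ⟨he.1, fun v hv => h (he.2 v hv)⟩

lemma key_aux {V : Type*} [Fintype V] [DecidableEq V] (G : SimpleGraph V) [DecidableRel G.Adj]
    (d : ℝ) :
    ∀ (n : ℕ) (w : V → ℝ) (c : Sym2 V → ℝ),
      (Finset.univ.filter (fun v => 0 < w v)).card ≤ n →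
      (∀ v, 0 ≤ w v) →
      (∀ e ∈ G.edgeFinset, 0 ≤ c e) →
      (∀ e ∈ G.edgeFinset, ∀ u ∈ e, c e ≤ w u) →
      (Finset.univ.filter (fun v => 0 < w v)).Nonempty →
      (∀ v : V, 0 < w v →
        ((edgesIn G (Finset.univ.filter (fun u => w v ≤ w u))).card : ℝ) <
          d * ((Finset.univ.filter (fun u => w v ≤ w u)).card : ℝ)) →
      ∑ e ∈ G.edgeFinset, c e < d * ∑ v : V, w v := by
  intro n
  induction n with
  | zero =>
    intro w c hcard _ _ _ hne _
    rw [Nat.le_zero, Finset.card_eq_zero] at hcard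
    rw [hcard] at hne
    exact absurd hne (by simp)
  | succ n ih =>
    intro w c hcard hw hc0 hcw hne hlt
    set supp := Finset.univ.filter (fun v => 0 < w v) with hsupp_def
    -- minimum positive value r₀
    have hne_img : (supp.image w).Nonempty := hne.image w
    set r₀ := (supp.image w).min' hne_img with hr₀_def
    obtain ⟨v₀, hv₀supp, hv₀w⟩ := Finset.mem_image.mp ((supp.image w).min'_mem hne_img)
    have hv₀pos : 0 < w v₀ := (Finset.mem_filter.mp hv₀supp).2
    have hr₀pos : 0 < r₀ := by rw [hr₀_def, ← hv₀w]; exact hv₀pos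
    have hr₀le : ∀ v, 0 < w v → r₀ ≤ w v := by
      intro v hv
      exact Finset.min'_le _ _ (Finset.mem_image_of_mem w (Finset.mem_filter.mpr ⟨mem_univ v, hv⟩))
    have hsupp_eq : supp = Finset.univ.filter (fun u => w v₀ ≤ w u) := by
      ext u
      simp only [hsupp_def, mem_filter, mem_univ, true_and, hv₀w]
      exact ⟨fun h => hr₀le u h, fun h => lt_of_lt_of_le hr₀pos h⟩
    -- shifted functions
    set w' : V → ℝ := fun v => w v - min (w v) r₀ with hw'_def
    set c' : Sym2 V → ℝ := fun e => c e - min (c e) r₀ with hc'_def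
    have hw'0 : ∀ v, 0 ≤ w' v := fun v => sub_nonneg.mpr (min_le_left _ _)
    have hw'pos : ∀ v, 0 < w' v ↔ r₀ < w v := by
      intro v
      constructor
      · intro h
        by_contra hcon
        push_neg at hcon
        have : min (w v) r₀ = w v := min_eq_left hcon
        simp only [hw'_def, this, sub_self, lt_irrefl] at h
      · intro h
        have : min (w v) r₀ = r₀ := min_eq_right h.le
        simp only [hw'_def, this]
        linarith
    have hw'eq : ∀ v, 0 < w v → w' v = w v - r₀ := by
      intro v hv
      simp only [hw'_def, min_eq_right (hr₀le v hv)]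
    have hw'zero : ∀ v, w v = 0 → w' v = 0 := by
      intro v hv
      simp [hw'_def, hv, le_of_lt hr₀pos]
    -- c' constraints
    have hc'0 : ∀ e ∈ G.edgeFinset, 0 ≤ c' e := fun e _ => sub_nonneg.mpr (min_le_left _ _)
    have hc'w' : ∀ e ∈ G.edgeFinset, ∀ u ∈ e, c' e ≤ w' u := by
      intro e he u hu
      by_cases h : r₀ ≤ c e
      · have h1 : min (c e) r₀ = r₀ := min_eq_right h
        have h2 : c e ≤ w u := hcw e he u hu
        have h3 : 0 < w u := lt_of_lt_of_le (lt_of_lt_of_le hr₀pos h) h2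
        have h4 := hw'eq u h3
        simp only [hc'_def, h1, h4]
        linarith
      · push_neg at h
        have h1 : min (c e) r₀ = c e := min_eq_left h.le
        simp only [hc'_def, h1, sub_self]
        exact hw'0 u
    -- vertex sum decomposition
    have hsum_w : ∑ v : V, w v = (∑ v : V, w' v) + r₀ * supp.card := by
      have h1 : ∀ v : V, w v = w' v + (if 0 < w v then r₀ else 0) := by
        intro v
        by_cases hv : 0 < w v
        · simp [hv, hw'eq v hv]
        · have hz : w v = 0 := le_antisymm (not_lt.mp hv) (hw v)
          simp [hv, hw'zero v hz, hz]
      rw [Finset.sum_congr rfl (fun v _ => h1 v), Finset.sum_add_distrib]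
      congr 1
      rw [← Finset.sum_filter]
      simp [hsupp_def, mul_comm]
    -- edge sum bound
    have hsum_c : ∑ e ∈ G.edgeFinset, c e ≤
        (∑ e ∈ G.edgeFinset, c' e) + r₀ * ((edgesIn G supp).card : ℝ) := by
      have h1 : ∀ e ∈ G.edgeFinset, c e ≤ c' e + (if e ∈ edgesIn G supp then r₀ else 0) := by
        intro e he
        by_cases hmem : e ∈ edgesIn G supp
        · simp only [hmem, if_pos]
          have : min (c e) r₀ ≤ r₀ := min_le_right _ _
          simp only [hc'_def]
          linarith
        · simp only [hmem, if_neg, not_false_iff, add_zero]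
          -- some endpoint has w u = 0, hence c e ≤ 0, hence c e = 0
          have : ¬ ∀ v ∈ e, v ∈ supp := by
            intro hall
            exact hmem (Finset.mem_filter.mpr ⟨he, hall⟩)
          push_neg at this
          obtain ⟨u, hu, hunot⟩ := this
          have hwu : w u = 0 := by
            have := Finset.mem_filter.not.mp hunot
            push_neg at this
            have h2 := this (mem_univ u)
            exact le_antisymm h2 (hw u)
          have h3 : c e ≤ 0 := by
            have := hcw e he u hu
            linarith [this, hwu]
          have h4 : min (c e) r₀ = c e := min_eq_left (le_trans h3 hr₀pos.le)
          simp only [hc'_def, h4, sub_self]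
          exact h3
      calc ∑ e ∈ G.edgeFinset, c e
          ≤ ∑ e ∈ G.edgeFinset, (c' e + (if e ∈ edgesIn G supp then r₀ else 0)) :=
            Finset.sum_le_sum h1
        _ = (∑ e ∈ G.edgeFinset, c' e) + ∑ e ∈ G.edgeFinset, (if e ∈ edgesIn G supp then r₀ else 0) :=
            Finset.sum_add_distrib
        _ = (∑ e ∈ G.edgeFinset, c' e) + r₀ * ((edgesIn G supp).card : ℝ) := by
            congr 1
            have hsubE : edgesIn G supp ⊆ G.edgeFinset := Finset.filter_subset _ _
            rw [Finset.sum_ite_mem, Finset.inter_eq_right.mpr hsubE,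
              Finset.sum_const, nsmul_eq_mul, mul_comm]
    -- strict bound at level r₀
    have hE0 : ((edgesIn G supp).card : ℝ) < d * (supp.card : ℝ) := by
      rw [hsupp_eq]
      exact hlt v₀ hv₀pos
    set supp' := Finset.univ.filter (fun v => 0 < w' v) with hsupp'_def
    have hsub : supp' ⊆ supp := by
      intro v hv
      have := (Finset.mem_filter.mp hv).2
      have h2 := (hw'pos v).mp this
      exact Finset.mem_filter.mpr ⟨mem_univ v, lt_trans hr₀pos h2⟩
    have hv₀not : v₀ ∉ supp' := by
      simp only [hsupp'_def, mem_filter, mem_univ, true_and]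
      rw [hw'pos]
      simp [hv₀w]
      exact ⟨v₀, hv₀supp, hv₀w.le⟩
    have hcard' : supp'.card ≤ n := by
      have : supp' ⊂ supp := (Finset.ssubset_iff_of_subset hsub).mpr ⟨v₀, hv₀supp, hv₀not⟩
      have h2 := Finset.card_lt_card this
      omega
    by_cases hne' : supp'.Nonempty
    · -- inductive case
      have hlt' : ∀ v : V, 0 < w' v →
          ((edgesIn G (Finset.univ.filter (fun u => w' v ≤ w' u))).card : ℝ) <
            d * ((Finset.univ.filter (fun u => w' v ≤ w' u)).card : ℝ) := by
        intro v hv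
        have hrv : r₀ < w v := (hw'pos v).mp hv
        have hset : Finset.univ.filter (fun u => w' v ≤ w' u)
            = Finset.univ.filter (fun u => w v ≤ w u) := by
          ext u
          simp only [mem_filter, mem_univ, true_and]
          have hv' : w' v = w v - r₀ := hw'eq v (lt_trans hr₀pos hrv)
          constructor
          · intro h
            have hu_pos : 0 < w' u := lt_of_lt_of_le (by rw [hv']; linarith) h
            have hru : r₀ < w u := (hw'pos u).mp hu_pos
            have hu' : w' u = w u - r₀ := hw'eq u (lt_trans hr₀pos hru)
            rw [hv', hu'] at h
            linarith
          · intro h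
            have hru : r₀ < w u := lt_of_lt_of_le hrv h
            have hu' : w' u = w u - r₀ := hw'eq u (lt_trans hr₀pos hru)
            rw [hv', hu']
            linarith
        rw [hset]
        exact hlt v (lt_trans hr₀pos hrv)
      have hih := ih w' c' hcard' hw'0 hc'0 hc'w' hne' hlt'
      have hE0' : r₀ * ((edgesIn G supp).card : ℝ) ≤ r₀ * (d * (supp.card : ℝ)) :=
        mul_le_mul_of_nonneg_left hE0.le hr₀pos.le
      rw [hsum_w]
      calc ∑ e ∈ G.edgeFinset, c e
          ≤ (∑ e ∈ G.edgeFinset, c' e) + r₀ * ((edgesIn G supp).card : ℝ) := hsum_c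
        _ < d * (∑ v : V, w' v) + r₀ * (d * (supp.card : ℝ)) := by linarith
        _ = d * ((∑ v : V, w' v) + r₀ * (supp.card : ℝ)) := by ring
    · -- base-like case: w' ≡ 0
      have hw'all : ∀ v, w' v = 0 := by
        intro v
        by_contra h
        have : 0 < w' v := lt_of_le_of_ne (hw'0 v) (Ne.symm h)
        exact hne' ⟨v, Finset.mem_filter.mpr ⟨mem_univ v, this⟩⟩
      have hsumw' : ∑ v : V, w' v = 0 := Finset.sum_eq_zero (fun v _ => hw'all v)
      have hc'le : ∑ e ∈ G.edgeFinset, c' e ≤ 0 := by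
        apply Finset.sum_nonpos
        intro e he
        have := hc'w' e he e.out.1 (Sym2.out_fst_mem e)
        rw [hw'all] at this
        exact this
      have hE0' : r₀ * ((edgesIn G supp).card : ℝ) < r₀ * (d * (supp.card : ℝ)) :=
        mul_lt_mul_of_pos_left hE0 hr₀pos
      rw [hsum_w, hsumw']
      calc ∑ e ∈ G.edgeFinset, c e
          ≤ (∑ e ∈ G.edgeFinset, c' e) + r₀ * ((edgesIn G supp).card : ℝ) := hsum_c
        _ < d * (0 + r₀ * (supp.card : ℝ)) := by
            rw [zero_add]
            calc (∑ e ∈ G.edgeFinset, c' e) + r₀ * ((edgesIn G supp).card : ℝ)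
                ≤ 0 + r₀ * ((edgesIn G supp).card : ℝ) := by linarith
              _ < r₀ * (d * (supp.card : ℝ)) := by linarith
              _ = d * (r₀ * (supp.card : ℝ)) := by ring

/-- `1/3`-approximation via the LP: some level set `S(r)` of an optimal LP solution for
`p* = (|S*_c|)_c` extends to a feasible set `S'` with `d(S') ≥ d(S*)/3`. -/
theorem stmt11 {V C : Type*} [Fintype V] [DecidableEq V] [Fintype C] [DecidableEq C]
    (G : SimpleGraph V) [DecidableRel G.Adj] (ℓ : V → C) (k : C → ℕ)
    (hkle : ∀ c : C, k c ≤ (colorClass ℓ Finset.univ c).card)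
    (hk : ∃ c : C, 1 ≤ k c)
    (Sstar : Finset V)
    (hfeas : ∀ c : C, k c ≤ (colorClass ℓ Sstar c).card)
    (hopt : ∀ T : Finset V, (∀ c : C, k c ≤ (colorClass ℓ T c).card) →
      density G T ≤ density G Sstar)
    (xstar : Sym2 V → ℝ) (ystar : V → ℝ)
    (hLPfeas : LPFeasible G ℓ (fun c => (colorClass ℓ Sstar c).card) xstar ystar)
    (hLPopt : ∀ (x : Sym2 V → ℝ) (y : V → ℝ),
      LPFeasible G ℓ (fun c => (colorClass ℓ Sstar c).card) x y →
      ∑ e ∈ G.edgeFinset, x e ≤ ∑ e ∈ G.edgeFinset, xstar e) :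
    ∃ (r : ℝ) (S' : Finset V), (r = 0 ∨ ∃ v : V, r = ystar v) ∧
      Finset.univ.filter (fun v => r ≤ ystar v) ⊆ S' ∧
      (∀ c : C, k c ≤ (colorClass ℓ S' c).card) ∧
      density G Sstar / 3 ≤ density G S' := by
  obtain ⟨hx_le, hsum_c, hy_le, hx_nn, hy_nn⟩ := hLPfeas
  -- ‖p‖₁ = |S*|
  have hnorm : (∑ c' : C, (colorClass ℓ Sstar c').card) = Sstar.card := by
    simp only [colorClass]
    exact (Finset.card_eq_sum_card_fiberwise (fun v _ => Finset.mem_univ (ℓ v))).symm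
  -- |S*| > 0
  have hm : 0 < Sstar.card := by
    obtain ⟨c0, hc0⟩ := hk
    have h1 := hfeas c0
    have h2 : (colorClass ℓ Sstar c0).card ≤ Sstar.card :=
      Finset.card_le_card (Finset.filter_subset _ _)
    omega
  have hmR : (0 : ℝ) < (Sstar.card : ℝ) := by exact_mod_cast hm
  -- ∑ y* = 1
  have hsumy : ∑ v : V, ystar v = 1 := by
    have h1 : ∑ v : V, ystar v
        = ∑ c : C, ∑ v ∈ Finset.univ.filter (fun v => ℓ v = c), ystar v := by
      exact (Finset.sum_fiberwise_of_maps_to (fun v _ => Finset.mem_univ (ℓ v)) ystar).symm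
    rw [h1]
    have h2 : ∀ c : C, ∑ v ∈ Finset.univ.filter (fun v => ℓ v = c), ystar v
        = ((colorClass ℓ Sstar c).card : ℝ) / (Sstar.card : ℝ) := by
      intro c
      rw [hsum_c c, hnorm]
    rw [Finset.sum_congr rfl (fun c _ => h2 c), ← Finset.sum_div]
    rw [show ∑ c : C, ((colorClass ℓ Sstar c).card : ℝ) = ((Sstar.card : ℝ)) by
      exact_mod_cast congrArg (Nat.cast : ℕ → ℝ) hnorm]
    exact div_self (ne_of_gt hmR)
  -- Step 1: LP value ≥ d(S*)
  have hstep1 : density G Sstar ≤ ∑ e ∈ G.edgeFinset, xstar e := by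
    set y0 : V → ℝ := fun v => if v ∈ Sstar then ((Sstar.card : ℝ))⁻¹ else 0 with hy0
    set x0 : Sym2 V → ℝ := fun e => if e ∈ edgesIn G Sstar then ((Sstar.card : ℝ))⁻¹ else 0
      with hx0
    have hfeas0 : LPFeasible G ℓ (fun c => (colorClass ℓ Sstar c).card) x0 y0 := by
      refine ⟨?_, ?_, ?_, ?_, ?_⟩
      · intro e he v hv
        by_cases h : e ∈ edgesIn G Sstar
        · have hvS : v ∈ Sstar := (Finset.mem_filter.mp h).2 v hv
          simp [hx0, hy0, h, hvS]
        · simp only [hx0, hy0, h, if_neg, not_false_iff]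
          positivity
      · intro c
        have h1 : ∑ v ∈ Finset.univ.filter (fun v => ℓ v = c), y0 v
            = ∑ v ∈ (Finset.univ.filter (fun v => ℓ v = c)) ∩ Sstar, ((Sstar.card : ℝ))⁻¹ :=
          Finset.sum_ite_mem _ _ _
        have h2 : (Finset.univ.filter (fun v => ℓ v = c)) ∩ Sstar = colorClass ℓ Sstar c := by
          ext v
          simp [colorClass, and_comm]
        rw [h1, h2, Finset.sum_const, nsmul_eq_mul, hnorm]
        rw [div_eq_mul_inv]
      · intro v
        rw [hnorm, one_div]
        by_cases h : v ∈ Sstar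
        · simp [hy0, h]
        · simp only [hy0, h, if_neg, not_false_iff]
          positivity
      · intro e _
        simp only [hx0]
        by_cases h : e ∈ edgesIn G Sstar
        · simp only [h, if_pos]
          positivity
        · simp [h]
      · intro v
        simp only [hy0]
        by_cases h : v ∈ Sstar
        · simp only [h, if_pos]
          positivity
        · simp [h]
    have hle := hLPopt x0 y0 hfeas0
    have hval : ∑ e ∈ G.edgeFinset, x0 e
        = ((edgesIn G Sstar).card : ℝ) * ((Sstar.card : ℝ))⁻¹ := by
      have hsubE : edgesIn G Sstar ⊆ G.edgeFinset := Finset.filter_subset _ _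
      rw [show ∑ e ∈ G.edgeFinset, x0 e
          = ∑ e ∈ G.edgeFinset ∩ edgesIn G Sstar, ((Sstar.card : ℝ))⁻¹ from
        Finset.sum_ite_mem _ _ _, Finset.inter_eq_right.mpr hsubE, Finset.sum_const,
        nsmul_eq_mul]
    rw [hval] at hle
    calc density G Sstar = ((edgesIn G Sstar).card : ℝ) * ((Sstar.card : ℝ))⁻¹ := by
          rw [density, div_eq_mul_inv]
      _ ≤ ∑ e ∈ G.edgeFinset, xstar e := hle
  -- Step 2: find a good level set
  set d := density G Sstar with hd_def
  have hEx : ∃ v : V, 0 < ystar v ∧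
      d * ((Finset.univ.filter (fun u => ystar v ≤ ystar u)).card : ℝ)
        ≤ ((edgesIn G (Finset.univ.filter (fun u => ystar v ≤ ystar u))).card : ℝ) := by
    by_contra hcon
    push_neg at hcon
    have hne : (Finset.univ.filter (fun v => 0 < ystar v)).Nonempty := by
      by_contra h
      rw [Finset.not_nonempty_iff_eq_empty, Finset.filter_eq_empty_iff] at h
      have : ∀ v : V, ystar v = 0 := fun v =>
        le_antisymm (not_lt.mp (h (Finset.mem_univ v))) (hy_nn v)
      rw [Finset.sum_congr rfl (fun v _ => this v)] at hsumy
      simp at hsumy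
    have hkey := key_aux G d (Finset.univ.filter (fun v => 0 < ystar v)).card ystar xstar
      le_rfl hy_nn hx_nn hx_le hne hcon
    rw [hsumy, mul_one] at hkey
    linarith
  obtain ⟨v₁, hv₁pos, hEA⟩ := hEx
  set A := Finset.univ.filter (fun u => ystar v₁ ≤ ystar u) with hA_def
  refine ⟨ystar v₁, A ∪ Sstar, Or.inr ⟨v₁, rfl⟩, Finset.subset_union_left, ?_, ?_⟩
  · intro c
    refine le_trans (hfeas c) (Finset.card_le_card ?_)
    exact Finset.filter_subset_filter _ Finset.subset_union_right
  · -- density bound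
    set S' := A ∪ Sstar with hS'_def
    have hE'A : ((edgesIn G A).card : ℝ) ≤ ((edgesIn G S').card : ℝ) := by
      exact_mod_cast Finset.card_le_card (edgesIn_mono G Finset.subset_union_left)
    have hE'B : ((edgesIn G Sstar).card : ℝ) ≤ ((edgesIn G S').card : ℝ) := by
      exact_mod_cast Finset.card_le_card (edgesIn_mono G Finset.subset_union_right)
    have hn' : ((S').card : ℝ) ≤ (A.card : ℝ) + (Sstar.card : ℝ) := by
      exact_mod_cast Finset.card_union_le A Sstar
    have hn'pos : (0 : ℝ) < ((S').card : ℝ) := by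
      have : Sstar.card ≤ S'.card := Finset.card_le_card Finset.subset_union_right
      have : 0 < S'.card := lt_of_lt_of_le hm this
      exact_mod_cast this
    have hd_nn : 0 ≤ d := by
      rw [hd_def, density]
      positivity
    have hdB : d * (Sstar.card : ℝ) = ((edgesIn G Sstar).card : ℝ) := by
      rw [hd_def, density, div_mul_cancel₀ _ (ne_of_gt hmR)]
    have hE'nn : (0 : ℝ) ≤ ((edgesIn G S').card : ℝ) := by positivity
    have h2 : d * ((S').card : ℝ) ≤ 2 * ((edgesIn G S').card : ℝ) := by
      have c1 : d * ((S').card : ℝ) ≤ d * ((A.card : ℝ) + (Sstar.card : ℝ)) :=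
        mul_le_mul_of_nonneg_left hn' hd_nn
      have c2 : d * (A.card : ℝ) ≤ ((edgesIn G A).card : ℝ) := hEA
      nlinarith
    rw [show density G S' = ((edgesIn G S').card : ℝ) / ((S').card : ℝ) from rfl]
    rw [div_le_div_iff₀ (by norm_num : (0:ℝ) < 3) hn'pos]
    linarith
end
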